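/- Over a commutative ring R, every representable R-module is semi co-Hopfian. Explicitly: if M is a nonzero R-module that is a finite sum of secondary submodules, then for every x ∈ R, multiplication by x on M is an isomorphism whenever it is injective. -/

import Mathlib

open Function

universe u v w

def IsSecondarySubmodule {R : Type u} [CommRing R] {M : Type v} [AddCommGroup M]
    [Module R M] (S : Submodule R M) : Prop :=
  S ≠ ⊥ ∧ ∀ x : R,
    (∀ s ∈ S, ∃ t ∈ S, x • t = s) ∨ ∃ n : ℕ, ∀ s ∈ S, x ^ n • s = 0

def IsRepresentable (R : Type u) (M : Type v) [CommRing R] [AddCommGroup M]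
    [Module R M] : Prop :=
  ∃ (k : ℕ) (S : Fin k → Submodule R M),
    (∀ i, IsSecondarySubmodule (S i)) ∧ (⨆ i, S i) = ⊤

def SemiCoHopfian (R : Type u) (M : Type v) [CommRing R] [AddCommGroup M]
    [Module R M] : Prop :=
  ∀ x : R, Function.Injective (fun m : M => x • m) → Function.Bijective (fun m : M => x • m)

theorem isRepresentable_semiCoHopfian {R : Type u} [CommRing R] {M : Type v} [AddCommGroup M]
    [Module R M] (hM : Nontrivial M) (h : IsRepresentable R M) :
    SemiCoHopfian R M := by
  intro x hinj
  refine ⟨hinj, ?_⟩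
  obtain ⟨k, S, hsec, hsup⟩ := h
  -- powers of x act injectively
  have hpow : ∀ n : ℕ, Function.Injective (fun m : M => x ^ n • m) := by
    intro n
    induction n with
    | zero => intro a b hab; simpa using hab
    | succ n ih =>
      intro a b hab
      simp only [pow_succ, mul_smul] at hab
      exact hinj (ih hab)
  have hrange : ∀ i, S i ≤ LinearMap.range (x • (LinearMap.id : M →ₗ[R] M)) := by
    intro i s hs
    rcases (hsec i).2 x with hsurj | ⟨n, hn⟩
    · obtain ⟨t, _, ht⟩ := hsurj s hs
      exact ⟨t, by simpa using ht⟩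
    · exfalso
      obtain ⟨s₀, hs₀S, hs₀⟩ := (Submodule.ne_bot_iff _).mp (hsec i).1
      apply hs₀
      have h0 : x ^ n • s₀ = x ^ n • (0 : M) := by simpa using hn s₀ hs₀S
      exact hpow n h0
  have htop : (⊤ : Submodule R M) ≤ LinearMap.range (x • (LinearMap.id : M →ₗ[R] M)) := by
    rw [← hsup]; exact iSup_le hrange
  intro m
  obtain ⟨t, ht⟩ := htop (Submodule.mem_top (x := m))
  exact ⟨t, by simpa using ht⟩
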